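/- Let φ = (1+√5)/2, T_φ(x,y) = (x + 1/φ², y + x − 1/(2φ³)), and ψ⁻¹(x,y) = (−x/φ, −y − x²/(2φ) + x/(2φ²)). Then for all (x,y) ∈ ℝ²: T_φ(ψ⁻¹(x,y)) = ψ⁻¹(T_φ(x,y) − (1,0)). -/

import Mathlib

noncomputable section

/-- The golden ratio. -/
def φ : ℝ := (1 + Real.sqrt 5) / 2

/-- The affine nilsystem `T_φ (x, y) = (x + 1/φ², y + x − 1/(2φ³))`. -/
def Tφ : ℝ × ℝ → ℝ × ℝ := fun x => (x.1 + 1 / φ ^ 2, x.2 + x.1 - 1 / (2 * φ ^ 3))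

/-- The inverse of the renormalizing map `ψ (x,y) = (−φx, −y − φx²/2 + φ²x/2)`. -/
def ψinv : ℝ × ℝ → ℝ × ℝ :=
  fun x => (-x.1 / φ, -x.2 - x.1 ^ 2 / (2 * φ) + x.1 / (2 * φ ^ 2))

lemma phi_sq : φ ^ 2 = φ + 1 := by
  have h5 : Real.sqrt 5 ^ 2 = 5 := Real.sq_sqrt (by norm_num)
  unfold φ; ring_nf; nlinarith [h5]

lemma phi_pos : (0:ℝ) < φ := by
  have : (0:ℝ) ≤ Real.sqrt 5 := Real.sqrt_nonneg 5
  unfold φ; linarith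

/-- For all `(x, y) ∈ ℝ²`, `T_φ(ψ⁻¹(x,y)) = ψ⁻¹(T_φ(x,y) − (1,0))`. -/
theorem Tphi_psiInv_commutation (x y : ℝ) :
    Tφ (ψinv (x, y)) = ψinv (Tφ (x, y) - (1, 0)) := by
  have hφ : φ ≠ 0 := ne_of_gt phi_pos
  have h2 : φ ^ 2 = φ + 1 := phi_sq
  simp only [Tφ, ψinv, Prod.mk_sub_mk, Prod.mk.injEq]
  constructor
  · field_simp
    linear_combination (-1:ℝ) * h2
  · field_simp
    linear_combination (2*x*φ^2*(φ-1) + φ^2 + 2*φ - 1) * h2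

end
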